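/- Let λ > 0, let μ : ℕ₊ → ℝ be positive and nondecreasing with μ(i₀) > λ for some i₀ ≥ 1, let U ≥ μ(1), δ_max > 0, and S ∈ ℕ. Set C₁ := ∏_{i=1}^{i₀−1} μ(i₀)/μ(i), m(0) := (∑_{s'=0}^{S} ∏_{i=1}^{s'} λ/μ(i))^{-1}, m(s) := m(0)·∏_{i=1}^{s} λ/μ(i), and Δ(s) := 2·δ_max·m(0)^{-1}·∑_{i=1}^{s} U/μ(i). Then ∑_{s=0}^{S} (Δ(s+1) + δ_max)·√(m(s)) ≤ 3·δ_max·(U/μ(1))·C₁·(1 − √(λ/μ(i₀)))^{-3}. -/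

import Mathlib

private lemma sqrt_le_self' (x : ℝ) (hx : 1 ≤ x) : Real.sqrt x ≤ x := by
  rw [Real.sqrt_le_left (by linarith)]; nlinarith

private lemma sqrt_pow' (x : ℝ) (hx : 0 ≤ x) (n : ℕ) :
    Real.sqrt (x ^ n) = Real.sqrt x ^ n := by
  induction n with
  | zero => simp
  | succ n ih => rw [pow_succ, Real.sqrt_mul (pow_nonneg hx n), ih, pow_succ]

private lemma one_le_prod_real (s : Finset ℕ) (f : ℕ → ℝ) (h : ∀ i ∈ s, 1 ≤ f i) :
    1 ≤ ∏ i ∈ s, f i := by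
  calc (1:ℝ) = ∏ _i ∈ s, (1:ℝ) := by simp
    _ ≤ ∏ i ∈ s, f i := Finset.prod_le_prod (by simp) h

private lemma geom_sum_le' (r : ℝ) (h0 : 0 ≤ r) (h1 : r < 1) (n : ℕ) :
    ∑ s ∈ Finset.range n, r ^ s ≤ (1 - r)⁻¹ := by
  have := Summable.sum_le_tsum (Finset.range n) (fun i _ => pow_nonneg h0 i)
    (summable_geometric_of_lt_one h0 h1)
  rwa [tsum_geometric_of_lt_one h0 h1] at this

private lemma geom_sum_mul_le' (r : ℝ) (h0 : 0 ≤ r) (h1 : r < 1) (n : ℕ) :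
    ∑ s ∈ Finset.range n, ((s : ℝ) + 1) * r ^ s ≤ ((1 - r)⁻¹) ^ 2 := by
  have hs : HasSum (fun s : ℕ => (s : ℝ) * r ^ s) (r / (1 - r) ^ 2) :=
    hasSum_coe_mul_geometric_of_norm_lt_one (by rwa [Real.norm_eq_abs, abs_of_nonneg h0])
  have h1r : 0 < 1 - r := by linarith
  have hA : ∑ s ∈ Finset.range n, (s : ℝ) * r ^ s ≤ r / (1 - r) ^ 2 := by
    have := Summable.sum_le_tsum (Finset.range n)
      (fun i _ => mul_nonneg (Nat.cast_nonneg i) (pow_nonneg h0 i)) hs.summable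
    rwa [hs.tsum_eq] at this
  have hB := geom_sum_le' r h0 h1 n
  have hsum : ∑ s ∈ Finset.range n, ((s : ℝ) + 1) * r ^ s
      = (∑ s ∈ Finset.range n, (s : ℝ) * r ^ s) + ∑ s ∈ Finset.range n, r ^ s := by
    rw [← Finset.sum_add_distrib]
    exact Finset.sum_congr rfl fun s _ => by ring
  rw [hsum]
  have hid : r / (1 - r) ^ 2 + (1 - r)⁻¹ = ((1 - r)⁻¹) ^ 2 := by
    field_simp; ring
  linarith

set_option maxHeartbeats 1000000 in
/-- the weighted sum of bias variations against the square root of the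
stationary distribution is bounded independently of the capacity `S`. -/
theorem stmt14 (lam : ℝ) (hlam : 0 < lam) (μ : ℕ → ℝ)
    (hpos : 0 < μ 1) (hmono : ∀ i, 1 ≤ i → μ i ≤ μ (i + 1))
    (i₀ : ℕ) (hi₀ : 1 ≤ i₀) (hstab : lam < μ i₀)
    (U δmax : ℝ) (hU : μ 1 ≤ U) (hδ : 0 < δmax) (S : ℕ)
    (C₁ : ℝ) (hC₁ : C₁ = ∏ i ∈ Finset.Icc 1 (i₀ - 1), μ i₀ / μ i)
    (m0inv : ℝ)
    (hm0inv : m0inv = ∑ s' ∈ Finset.range (S + 1), ∏ i ∈ Finset.Icc 1 s', lam / μ i)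
    (msm : ℕ → ℝ) (hmsm : ∀ s, msm s = (∏ i ∈ Finset.Icc 1 s, lam / μ i) / m0inv)
    (Δ : ℕ → ℝ) (hΔ : ∀ s, Δ s = 2 * δmax * m0inv * ∑ i ∈ Finset.Icc 1 s, U / μ i) :
    ∑ s ∈ Finset.range (S + 1), (Δ (s + 1) + δmax) * Real.sqrt (msm s) ≤
      3 * δmax * (U / μ 1) * C₁ * ((1 - Real.sqrt (lam / μ i₀))⁻¹) ^ 3 := by
  -- basic monotonicity / positivity facts
  have hmono2 : ∀ i j, 1 ≤ i → i ≤ j → μ i ≤ μ j := by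
    intro i j hi hij
    induction j, hij using Nat.le_induction with
    | base => rfl
    | succ j hj ih => exact le_trans ih (hmono j (le_trans hi hj))
  have hμpos : ∀ i, 1 ≤ i → 0 < μ i := fun i hi => lt_of_lt_of_le hpos (hmono2 1 i le_rfl hi)
  have hμi₀ : 0 < μ i₀ := hμpos i₀ hi₀
  have hU0 : 0 ≤ U := le_of_lt (lt_of_lt_of_le hpos hU)
  set ρ : ℝ := lam / μ i₀ with hρ
  have hρ0 : 0 < ρ := div_pos hlam hμi₀
  have hρ1 : ρ < 1 := (div_lt_one hμi₀).mpr hstab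
  set r : ℝ := Real.sqrt ρ with hrdef
  have hr0 : 0 ≤ r := Real.sqrt_nonneg ρ
  have hr1 : r < 1 := by
    rw [hrdef, show (1:ℝ) = Real.sqrt 1 by simp]
    exact Real.sqrt_lt_sqrt (le_of_lt hρ0) hρ1
  have hrsq : r ^ 2 = ρ := by rw [hrdef, sq, Real.mul_self_sqrt (le_of_lt hρ0)]
  have hρr : ρ ≤ r := by nlinarith
  have h1r : 0 < 1 - r := by linarith
  set K : ℝ := (1 - r)⁻¹ with hKdef
  have hK0 : 0 < K := inv_pos.mpr h1r
  have hK1 : 1 ≤ K := (one_le_inv₀ h1r).mpr (by linarith)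
  -- products
  set p : ℕ → ℝ := fun s => ∏ i ∈ Finset.Icc 1 s, lam / μ i with hpdef
  have hpapp : ∀ s, p s = ∏ i ∈ Finset.Icc 1 s, lam / μ i := fun s => by rw [hpdef]
  have hppos : ∀ s, 0 < p s := fun s => by
    rw [hpapp]
    exact Finset.prod_pos fun i hi => div_pos hlam (hμpos i (Finset.mem_Icc.mp hi).1)
  clear_value ρ r K p
  -- C₁ bounds
  have hC₁pos : 0 < C₁ := by
    rw [hC₁]
    exact Finset.prod_pos fun i hi => div_pos hμi₀ (hμpos i (Finset.mem_Icc.mp hi).1)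
  have hC₁1 : 1 ≤ C₁ := by
    rw [hC₁]
    apply one_le_prod_real
    intro i hi
    obtain ⟨h1i, h2i⟩ := Finset.mem_Icc.mp hi
    exact (one_le_div (hμpos i h1i)).mpr (hmono2 i i₀ h1i (by omega))
  -- the ratio product is bounded by C₁
  have hQ : ∀ s : ℕ, (∏ i ∈ Finset.Icc 1 s, μ i₀ / μ i) ≤ C₁ := by
    intro s
    have hIcc : ∀ k : ℕ, Finset.Icc 1 k = Finset.Ioc 0 k := fun k => Finset.Icc_add_one_left_eq_Ioc 0 k
    rcases Nat.le_total s (i₀ - 1) with h | h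
    · rw [hC₁, hIcc, hIcc,
        ← Finset.prod_Ioc_consecutive (fun i => μ i₀ / μ i) (Nat.zero_le s) h]
      have hpos1 : 0 < ∏ i ∈ Finset.Ioc 0 s, μ i₀ / μ i :=
        Finset.prod_pos fun i hi => div_pos hμi₀ (hμpos i (Finset.mem_Ioc.mp hi).1)
      have h2 : 1 ≤ ∏ i ∈ Finset.Ioc s (i₀ - 1), μ i₀ / μ i := by
        apply one_le_prod_real
        intro i hi
        obtain ⟨h1i, h2i⟩ := Finset.mem_Ioc.mp hi
        exact (one_le_div (hμpos i (by omega))).mpr (hmono2 i i₀ (by omega) (by omega))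
      nlinarith
    · rw [hC₁, hIcc, hIcc,
        ← Finset.prod_Ioc_consecutive (fun i => μ i₀ / μ i) (Nat.zero_le (i₀ - 1)) h]
      have h2 : ∏ i ∈ Finset.Ioc (i₀ - 1) s, μ i₀ / μ i ≤ 1 := by
        apply Finset.prod_le_one
        · intro i hi
          have h1i := (Finset.mem_Ioc.mp hi).1
          exact le_of_lt (div_pos hμi₀ (hμpos i (by omega)))
        · intro i hi
          obtain ⟨h1i, h2i⟩ := Finset.mem_Ioc.mp hi
          exact (div_le_one (hμpos i (by omega))).mpr (hmono2 i₀ i hi₀ (by omega))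
      have hpos1 : 0 < ∏ i ∈ Finset.Ioc 0 (i₀ - 1), μ i₀ / μ i :=
        Finset.prod_pos fun i hi => div_pos hμi₀ (hμpos i (Finset.mem_Ioc.mp hi).1)
      nlinarith
  -- p s ≤ C₁ ρ^s
  have hple : ∀ s : ℕ, p s ≤ C₁ * ρ ^ s := by
    intro s
    have hps : p s = ρ ^ s * ∏ i ∈ Finset.Icc 1 s, μ i₀ / μ i := by
      have h1 : p s = ∏ i ∈ Finset.Icc 1 s, ρ * (μ i₀ / μ i) := by
        rw [hpapp]
        apply Finset.prod_congr rfl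
        intro i hi
        have hμi : μ i ≠ 0 := ne_of_gt (hμpos i (Finset.mem_Icc.mp hi).1)
        field_simp [hρ]
        rw [hρ, div_mul_cancel₀ _ (ne_of_gt hμi₀)]
      rw [h1, Finset.prod_mul_distrib, Finset.prod_const, Nat.card_Icc]
      simp
    rw [hps, mul_comm C₁ (ρ ^ s)]
    exact mul_le_mul_of_nonneg_left (hQ s) (pow_nonneg (le_of_lt hρ0) s)
  -- sqrt of p bound
  have hsqrtp : ∀ s : ℕ, Real.sqrt (p s) ≤ Real.sqrt C₁ * r ^ s := by
    intro s
    calc Real.sqrt (p s) ≤ Real.sqrt (C₁ * ρ ^ s) := Real.sqrt_le_sqrt (hple s)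
      _ = Real.sqrt C₁ * r ^ s := by
          rw [Real.sqrt_mul (le_of_lt hC₁pos), sqrt_pow' ρ (le_of_lt hρ0), ← hrdef]
  -- m0inv bounds
  have hm0_1 : 1 ≤ m0inv := by
    rw [hm0inv]
    have h0 : p 0 = 1 := by simp [hpdef]
    calc (1:ℝ) = p 0 := h0.symm
      _ ≤ _ := Finset.single_le_sum (f := p)
          (fun s' _ => le_of_lt (hppos s')) (Finset.mem_range.mpr (Nat.succ_pos S))
  have hm0pos : 0 < m0inv := lt_of_lt_of_le one_pos hm0_1
  have hm0le : m0inv ≤ C₁ * K ^ 2 := by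
    rw [hm0inv]
    calc ∑ s' ∈ Finset.range (S + 1), p s'
        ≤ ∑ s' ∈ Finset.range (S + 1), C₁ * r ^ s' := by
          apply Finset.sum_le_sum
          intro s' _
          calc p s' ≤ C₁ * ρ ^ s' := hple s'
            _ ≤ C₁ * r ^ s' := by
                apply mul_le_mul_of_nonneg_left _ (le_of_lt hC₁pos)
                exact pow_le_pow_left₀ (le_of_lt hρ0) hρr s'
      _ = C₁ * ∑ s' ∈ Finset.range (S + 1), r ^ s' := by rw [Finset.mul_sum]
      _ ≤ C₁ * K := by
          have hg : ∑ s' ∈ Finset.range (S + 1), r ^ s' ≤ K := by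
            rw [hKdef]; exact geom_sum_le' r hr0 hr1 (S + 1)
          exact mul_le_mul_of_nonneg_left hg (le_of_lt hC₁pos)
      _ ≤ C₁ * K ^ 2 := by nlinarith [mul_nonneg hC₁pos.le (mul_nonneg hK0.le (sub_nonneg.mpr hK1))]
  set t : ℝ := Real.sqrt m0inv with htdef
  have ht0 : 0 < t := Real.sqrt_pos.mpr hm0pos
  have ht1 : 1 ≤ t := Real.one_le_sqrt.mpr hm0_1
  have htsq : t * t = m0inv := Real.mul_self_sqrt (le_of_lt hm0pos)
  clear_value t
  have hsqrtm0 : t ≤ Real.sqrt C₁ * K := by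
    calc t ≤ Real.sqrt (C₁ * K ^ 2) := by rw [htdef]; exact Real.sqrt_le_sqrt hm0le
      _ = Real.sqrt C₁ * K := by
          rw [Real.sqrt_mul (le_of_lt hC₁pos), Real.sqrt_sq (le_of_lt hK0)]
  have hsqC₁ : 0 ≤ Real.sqrt C₁ := Real.sqrt_nonneg C₁
  have hUμ : 1 ≤ U / μ 1 := (one_le_div hpos).mpr hU
  -- per-term bound
  have hterm : ∀ s ∈ Finset.range (S + 1),
      (Δ (s + 1) + δmax) * Real.sqrt (msm s) ≤
        (2 * δmax * (U / μ 1) * t * ((s:ℝ) + 1) + δmax) * (Real.sqrt C₁ * r ^ s) := by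
    intro s _
    have hΔle : Δ (s + 1) ≤ 2 * δmax * m0inv * (((s:ℝ) + 1) * (U / μ 1)) := by
      rw [hΔ]
      have hsum : ∑ i ∈ Finset.Icc 1 (s + 1), U / μ i ≤ ((s:ℝ) + 1) * (U / μ 1) := by
        calc ∑ i ∈ Finset.Icc 1 (s + 1), U / μ i
            ≤ ∑ i ∈ Finset.Icc 1 (s + 1), U / μ 1 := by
              apply Finset.sum_le_sum
              intro i hi
              have h1i := (Finset.mem_Icc.mp hi).1
              exact div_le_div_of_nonneg_left hU0 hpos (hmono2 1 i le_rfl h1i)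
          _ = ((s:ℝ) + 1) * (U / μ 1) := by
              rw [Finset.sum_const, Nat.card_Icc]
              push_cast [nsmul_eq_mul]
              ring
      exact mul_le_mul_of_nonneg_left hsum (by positivity)
    have hΔnn : 0 ≤ Δ (s + 1) := by
      rw [hΔ]
      apply mul_nonneg (by positivity)
      exact Finset.sum_nonneg fun i hi =>
        le_of_lt (div_pos (lt_of_lt_of_le hpos hU) (hμpos i (Finset.mem_Icc.mp hi).1))
    have hmsmval : Real.sqrt (msm s) = Real.sqrt (p s) / t := by
      rw [hmsm, ← hpapp, htdef, Real.sqrt_div (le_of_lt (hppos s))]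
    rw [hmsmval]
    have hrs : (0:ℝ) ≤ r ^ s := pow_nonneg hr0 s
    calc (Δ (s + 1) + δmax) * (Real.sqrt (p s) / t)
        ≤ (2 * δmax * m0inv * (((s:ℝ) + 1) * (U / μ 1)) + δmax) *
            ((Real.sqrt C₁ * r ^ s) / t) := by
          apply mul_le_mul (by linarith)
          · gcongr
            exact hsqrtp s
          · positivity
          · nlinarith
      _ = ((2 * δmax * m0inv * (((s:ℝ) + 1) * (U / μ 1)) + δmax) / t) *
            (Real.sqrt C₁ * r ^ s) := by ring
      _ ≤ (2 * δmax * (U / μ 1) * t * ((s:ℝ) + 1) + δmax) * (Real.sqrt C₁ * r ^ s) := by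
          apply mul_le_mul_of_nonneg_right _ (by positivity)
          rw [div_le_iff₀ ht0, ← htsq]
          nlinarith
  -- sum everything
  have hsum1 : ∑ s ∈ Finset.range (S + 1),
      (2 * δmax * (U / μ 1) * t * ((s:ℝ) + 1) + δmax) * (Real.sqrt C₁ * r ^ s)
      = (2 * δmax * (U / μ 1) * t * Real.sqrt C₁) *
          (∑ s ∈ Finset.range (S + 1), ((s:ℝ) + 1) * r ^ s) +
        (δmax * Real.sqrt C₁) * (∑ s ∈ Finset.range (S + 1), r ^ s) := by
    rw [Finset.mul_sum, Finset.mul_sum, ← Finset.sum_add_distrib]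
    exact Finset.sum_congr rfl fun s _ => by ring
  have hg1 : ∑ s ∈ Finset.range (S + 1), ((s:ℝ) + 1) * r ^ s ≤ K ^ 2 := by
    rw [hKdef]; exact geom_sum_mul_le' r hr0 hr1 (S + 1)
  have hg2 : ∑ s ∈ Finset.range (S + 1), r ^ s ≤ K := by
    rw [hKdef]; exact geom_sum_le' r hr0 hr1 (S + 1)
  have hsC : Real.sqrt C₁ ≤ C₁ := sqrt_le_self' C₁ hC₁1
  have hCs : Real.sqrt C₁ * Real.sqrt C₁ = C₁ := Real.mul_self_sqrt (le_of_lt hC₁pos)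
  have hfin1 : (2 * δmax * (U / μ 1) * t * Real.sqrt C₁) *
      (∑ s ∈ Finset.range (S + 1), ((s:ℝ) + 1) * r ^ s) ≤
      2 * δmax * (U / μ 1) * C₁ * K ^ 3 := by
    calc (2 * δmax * (U / μ 1) * t * Real.sqrt C₁) *
        (∑ s ∈ Finset.range (S + 1), ((s:ℝ) + 1) * r ^ s)
        ≤ (2 * δmax * (U / μ 1) * t * Real.sqrt C₁) * K ^ 2 := by
          apply mul_le_mul_of_nonneg_left hg1 (by positivity)
      _ ≤ (2 * δmax * (U / μ 1) * (Real.sqrt C₁ * K) * Real.sqrt C₁) * K ^ 2 := by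
          apply mul_le_mul_of_nonneg_right _ (by positivity)
          apply mul_le_mul_of_nonneg_right _ hsqC₁
          apply mul_le_mul_of_nonneg_left hsqrtm0 (by positivity)
      _ = 2 * δmax * (U / μ 1) * (Real.sqrt C₁ * Real.sqrt C₁) * K ^ 3 := by ring
      _ = 2 * δmax * (U / μ 1) * C₁ * K ^ 3 := by rw [hCs]
  have hfin2 : (δmax * Real.sqrt C₁) * (∑ s ∈ Finset.range (S + 1), r ^ s) ≤
      δmax * (U / μ 1) * C₁ * K ^ 3 := by
    have hKK : K ≤ K ^ 3 := by
      nlinarith [mul_nonneg (sub_nonneg.mpr hK1) (mul_nonneg hK0.le (by linarith : (0:ℝ) ≤ K + 1))]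
    calc (δmax * Real.sqrt C₁) * (∑ s ∈ Finset.range (S + 1), r ^ s)
        ≤ (δmax * Real.sqrt C₁) * K := by
          apply mul_le_mul_of_nonneg_left hg2 (by positivity)
      _ ≤ δmax * (C₁ * K ^ 3) := by
          have h1 : Real.sqrt C₁ * K ≤ C₁ * K ^ 3 :=
            mul_le_mul hsC hKK (le_of_lt hK0) (le_of_lt hC₁pos)
          nlinarith
      _ ≤ δmax * ((U / μ 1) * (C₁ * K ^ 3)) := by
          apply mul_le_mul_of_nonneg_left _ (le_of_lt hδ)
          nlinarith [mul_nonneg (sub_nonneg.mpr hUμ)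
            (mul_nonneg hC₁pos.le (pow_nonneg hK0.le 3))]
      _ = δmax * (U / μ 1) * C₁ * K ^ 3 := by ring
  calc ∑ s ∈ Finset.range (S + 1), (Δ (s + 1) + δmax) * Real.sqrt (msm s)
      ≤ ∑ s ∈ Finset.range (S + 1),
          (2 * δmax * (U / μ 1) * t * ((s:ℝ) + 1) + δmax) * (Real.sqrt C₁ * r ^ s) :=
        Finset.sum_le_sum hterm
    _ = _ := hsum1
    _ ≤ 2 * δmax * (U / μ 1) * C₁ * K ^ 3 + δmax * (U / μ 1) * C₁ * K ^ 3 := by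
        exact add_le_add hfin1 hfin2
    _ = 3 * δmax * (U / μ 1) * C₁ * K ^ 3 := by ring
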